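/- Let A be a primitive PC(η)-axial algebra with Frobenius form (·,·) normalized by (a,a) = 1 on primitive axes. Let a be a primitive axis and x, y ∈ A, and write x = α·a + x_η + x_{1/2}, y = γ·a + y_η + y_{1/2} with x_η, y_η ∈ A_η(a), x_{1/2}, y_{1/2} ∈ A_{1/2}(a), where α = (a,x), γ = (a,y); set β = (x,y) and ψ = (a, xy). Then (x_η, y_η) = (αγ + β - 2ψ)/(1 - 2η) and (x_{1/2}, y_{1/2}) = 2·((η-1)αγ - ηβ + ψ)/(1 - 2η). -/
import Mathlib


open Submodule

variable {F : Type*} [Field F] {A : Type*} [NonUnitalNonAssocCommRing A]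
  [Module F A] [SMulCommClass F A A] [IsScalarTower F A A]

variable (F) in
/-- The `lam`-eigenspace of the adjoint map of `a`. -/
def PCeig (a : A) (lam : F) : Submodule F A where
  carrier := {x : A | a * x = lam • x}
  add_mem' := by
    intro x y hx hy
    simp only [Set.mem_setOf_eq] at hx hy ⊢
    rw [mul_add, hx, hy, smul_add]
  zero_mem' := by simp
  smul_mem' := by
    intro c x hx
    simp only [Set.mem_setOf_eq] at hx ⊢
    rw [mul_smul_comm, hx, smul_smul, smul_smul, mul_comm]

variable (F) in
/-- The fusion law `PC(η)` for an idempotent (axis) `a`. -/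
structure IsPCAxis (η : F) (a : A) : Prop where
  idem : a * a = a
  decomp : PCeig F a 1 ⊔ PCeig F a η ⊔ PCeig F a (1/2 : F) = ⊤
  fus11 : ∀ x ∈ PCeig F a 1, ∀ y ∈ PCeig F a 1, x * y ∈ PCeig F a 1
  fus1e : ∀ x ∈ PCeig F a 1, ∀ y ∈ PCeig F a η, x * y ∈ PCeig F a η
  fus1h : ∀ x ∈ PCeig F a 1, ∀ y ∈ PCeig F a (1/2 : F), x * y ∈ PCeig F a (1/2 : F)
  fusee : ∀ x ∈ PCeig F a η, ∀ y ∈ PCeig F a η, x * y ∈ PCeig F a 1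
  fuseh : ∀ x ∈ PCeig F a η, ∀ y ∈ PCeig F a (1/2 : F), x * y ∈ PCeig F a (1/2 : F)
  fushh : ∀ x ∈ PCeig F a (1/2 : F), ∀ y ∈ PCeig F a (1/2 : F),
    x * y ∈ PCeig F a 1 ⊔ PCeig F a η

variable (F) in
/-- A primitive axis: an axis with `A_1(a) = F·a` (one-dimensional). -/
def IsPrimPCAxis (η : F) (a : A) : Prop :=
  IsPCAxis F η a ∧ a ≠ 0 ∧ PCeig F a 1 = Submodule.span F {a}

variable (F A) in
/-- A `PC(η)`-axial algebra: generated, as a non-unital algebra, by a (nonempty) set of axes. -/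
def IsPCAxialAlgebra (η : F) : Prop :=
  ∃ X : Set A, X.Nonempty ∧ (∀ a ∈ X, IsPCAxis F η a) ∧
    NonUnitalAlgebra.adjoin F X = ⊤

variable (F A) in
/-- A primitive `PC(η)`-axial algebra: generated by a (nonempty) set of primitive axes. -/
def IsPrimPCAxialAlgebra (η : F) : Prop :=
  ∃ X : Set A, X.Nonempty ∧ (∀ a ∈ X, IsPrimPCAxis F η a) ∧
    NonUnitalAlgebra.adjoin F X = ⊤

/-- values of the normalized Frobenius form on the `η`- and `1/2`-components of
elements `x`, `y` with respect to a primitive axis `a`. -/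
theorem stmt13 (η : F) (h2 : (2 : F) ≠ 0) (hη1 : η ≠ 1) (hηh : η ≠ 1 / 2)
    (hA : IsPrimPCAxialAlgebra F A η)
    (B : A →ₗ[F] A →ₗ[F] F) (hB0 : B ≠ 0)
    (hBsymm : ∀ x y : A, B x y = B y x)
    (hBfrob : ∀ x y z : A, B (x * y) z = B x (y * z))
    (hBnorm : ∀ a : A, IsPrimPCAxis F η a → B a a = 1)
    (a : A) (ha : IsPrimPCAxis F η a)
    (x y xe xh ye yh : A)
    (hxe : xe ∈ PCeig F a η) (hxh : xh ∈ PCeig F a (1 / 2 : F))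
    (hye : ye ∈ PCeig F a η) (hyh : yh ∈ PCeig F a (1 / 2 : F))
    (hx : x = (B a x) • a + xe + xh) (hy : y = (B a y) • a + ye + yh) :
    B xe ye = (B a x * B a y + B x y - 2 * B a (x * y)) / (1 - 2 * η) ∧
    B xh yh = 2 * ((η - 1) * (B a x * B a y) - η * B x y + B a (x * y)) / (1 - 2 * η) := by
  obtain ⟨hax, hane, hprim⟩ := ha
  have haa : a * a = (1:F) • a := by rw [hax.idem, one_smul]
  have hxe' : a * xe = η • xe := hxe
  have hxh' : a * xh = (1/2 : F) • xh := hxh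
  have hye' : a * ye = η • ye := hye
  have hyh' : a * yh = (1/2 : F) • yh := hyh
  have horth : ∀ (lam mu : F) (u v : A), a*u = lam•u → a*v = mu•v → lam ≠ mu → B u v = 0 := by
    intro lam mu u v hu hv hne
    have h1 : lam * B u v = mu * B u v := by
      have h2' : B (a*u) v = B u (a*v) := by
        rw [mul_comm a u, hBfrob]
      rw [hu, hv] at h2'
      simpa [smul_eq_mul] using h2'
    have hz : (lam - mu) * B u v = 0 := by linear_combination h1
    rcases mul_eq_zero.mp hz with h | h
    · exact absurd (sub_eq_zero.mp h) hne
    · exact h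
  have h1η : (1:F) ≠ η := fun h => hη1 h.symm
  have h1h : (1:F) ≠ 1/2 := by
    intro h
    rw [eq_div_iff h2, one_mul] at h
    exact one_ne_zero (by linear_combination h : (1:F) = 0)
  have Baa : B a a = 1 := hBnorm a ⟨hax, hane, hprim⟩
  have Baxe : B a xe = 0 := horth 1 η a xe haa hxe' h1η
  have Baye : B a ye = 0 := horth 1 η a ye haa hye' h1η
  have Baxh : B a xh = 0 := horth 1 (1/2) a xh haa hxh' h1h
  have Bayh : B a yh = 0 := horth 1 (1/2) a yh haa hyh' h1h
  have Bxeyh : B xe yh = 0 := horth η (1/2) xe yh hxe' hyh' hηh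
  have Bxhye : B xh ye = 0 := horth (1/2) η xh ye hxh' hye' (fun h => hηh h.symm)
  have Bxea : B xe a = 0 := by rw [hBsymm]; exact Baxe
  have Bxha : B xh a = 0 := by rw [hBsymm]; exact Baxh
  have e1 : B x y = B a x * B a y + B xe ye + B xh yh := by
    conv_lhs => rw [hx, hy]
    simp only [map_add, map_smul, LinearMap.add_apply, LinearMap.smul_apply, smul_eq_mul,
      Baa, Baxe, Baye, Baxh, Bayh, Bxea, Bxha, Bxeyh, Bxhye]
    ring
  have hax' : a * x = B a x • a + η • xe + (1/2 : F) • xh := by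
    conv_lhs => rw [hx]
    rw [mul_add, mul_add, mul_smul_comm, haa, hxe', hxh', smul_smul, mul_one]
  have e2 : B a (x * y) = B a x * B a y + η * B xe ye + (1/2) * B xh yh := by
    rw [← hBfrob, hax']
    conv_lhs => rw [hy]
    simp only [map_add, map_smul, LinearMap.add_apply, LinearMap.smul_apply, smul_eq_mul,
      Baa, Baxe, Baye, Baxh, Bayh, Bxea, Bxha, Bxeyh, Bxhye]
    ring
  have hden : (1:F) - 2*η ≠ 0 := by
    intro h
    exact hηh (by field_simp; linear_combination -h)
  have hinv : (2:F)⁻¹ * 2 = 1 := inv_mul_cancel₀ h2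
  constructor
  · rw [eq_div_iff hden]
    linear_combination 2*e2 - e1 + (B xh) yh * hinv
  · rw [eq_div_iff hden]
    linear_combination (2*η)*e1 - 2*e2 - (B xh) yh * hinv
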